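/- Let V and W be finite-dimensional normed real vector spaces, let φ : W →ₗ[ℝ] V be a linear map, and let C ⊆ V and C' ⊆ W be closed subsets, each stable under multiplication by every nonzero real scalar and containing 0. Assume the transversality condition: for all v ∈ C and w ∈ C', if v + φ(w) = 0 then v = 0 and w = 0. Then there exists a constant c > 0 such that ‖v + φ(w)‖ ≥ c · (‖v‖ + ‖w‖) for all v ∈ C and all w ∈ C'. -/

import Mathlib

/-- Quantitative coercivity behind Lemma 2.8: under the fiberwise
transversality condition, `‖v + φ w‖` is bounded below by a positive multiple
of `‖v‖ + ‖w‖` on the cones. -/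
theorem coercivity_of_transversal
    {V W : Type*}
    [NormedAddCommGroup V] [NormedSpace ℝ V] [FiniteDimensional ℝ V]
    [NormedAddCommGroup W] [NormedSpace ℝ W] [FiniteDimensional ℝ W]
    (φ : W →ₗ[ℝ] V) (C : Set V) (C' : Set W)
    (hCclosed : IsClosed C) (hC'closed : IsClosed C')
    (hCcone : ∀ c : ℝ, c ≠ 0 → ∀ v ∈ C, c • v ∈ C)
    (hC'cone : ∀ c : ℝ, c ≠ 0 → ∀ w ∈ C', c • w ∈ C')
    (h0 : (0 : V) ∈ C) (h0' : (0 : W) ∈ C')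
    (htrans : ∀ v ∈ C, ∀ w ∈ C', v + φ w = 0 → v = 0 ∧ w = 0) :
    ∃ c : ℝ, 0 < c ∧ ∀ v ∈ C, ∀ w ∈ C', ‖v + φ w‖ ≥ c * (‖v‖ + ‖w‖) := by
  set S : Set (V × W) := (C ×ˢ C') ∩ {p | ‖p.1‖ + ‖p.2‖ = 1} with hS
  have hg : Continuous fun p : V × W => ‖p.1 + φ p.2‖ := by
    exact (continuous_fst.add ((φ.continuous_of_finiteDimensional).comp continuous_snd)).norm
  have hSclosed : IsClosed S :=
    (hCclosed.prod hC'closed).inter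
      (isClosed_eq (continuous_fst.norm.add continuous_snd.norm) continuous_const)
  have hSb : Bornology.IsBounded S := by
    apply Bornology.IsBounded.subset (Metric.isBounded_closedBall (x := (0 : V × W)) (r := 1))
    rintro p ⟨-, hp⟩
    simp only [Set.mem_setOf_eq] at hp
    simp only [Metric.mem_closedBall, dist_zero_right]
    have : ‖p‖ ≤ ‖p.1‖ + ‖p.2‖ := by
      rw [Prod.norm_def]
      exact max_le (le_add_of_nonneg_right (norm_nonneg _))
        (le_add_of_nonneg_left (norm_nonneg _))
    simpa [hp] using this
  have hScompact : IsCompact S := Metric.isCompact_of_isClosed_isBounded hSclosed hSb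
  -- key: the bound on S
  have key : ∃ c : ℝ, 0 < c ∧ ∀ p ∈ S, c ≤ ‖p.1 + φ p.2‖ := by
    rcases S.eq_empty_or_nonempty with hE | hne
    · exact ⟨1, one_pos, by simp [hE]⟩
    · obtain ⟨p₀, hp₀S, hmin⟩ := hScompact.exists_isMinOn hne (hg.continuousOn)
      refine ⟨‖p₀.1 + φ p₀.2‖, ?_, fun p hp => hmin hp⟩
      rcases hp₀S with ⟨⟨h1, h2⟩, hnorm⟩
      have hne0 : p₀.1 + φ p₀.2 ≠ 0 := by
        intro h
        obtain ⟨hv, hw⟩ := htrans _ h1 _ h2 h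
        simp only [Set.mem_setOf_eq, hv, hw, norm_zero, add_zero] at hnorm
        linarith
      exact norm_pos_iff.mpr hne0
  obtain ⟨c, hc, hcS⟩ := key
  refine ⟨c, hc, fun v hv w hw => ?_⟩
  set s := ‖v‖ + ‖w‖ with hs
  rcases eq_or_lt_of_le (by positivity : (0:ℝ) ≤ s) with h0s | h0s
  · have hv0 : ‖v‖ = 0 := by
      nlinarith [norm_nonneg v, norm_nonneg w]
    have hw0 : ‖w‖ = 0 := by
      nlinarith [norm_nonneg v, norm_nonneg w]
    rw [norm_eq_zero] at hv0 hw0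
    simp [hv0, hw0, ← h0s]
  · have hsne : s ≠ 0 := ne_of_gt h0s
    have hmem : ((s⁻¹ • v, s⁻¹ • w) : V × W) ∈ S := by
      refine ⟨⟨hCcone _ (inv_ne_zero hsne) _ hv, hC'cone _ (inv_ne_zero hsne) _ hw⟩, ?_⟩
      simp only [Set.mem_setOf_eq, norm_smul, norm_inv, Real.norm_eq_abs,
        abs_of_pos h0s]
      field_simp
      exact hs.symm
    have := hcS _ hmem
    simp only [map_smul, ← smul_add, norm_smul, norm_inv, Real.norm_eq_abs,
      abs_of_pos h0s] at this
    have h2 := mul_le_mul_of_nonneg_right this h0s.le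
    rw [inv_mul_eq_div, div_mul_cancel₀ _ hsne] at h2
    linarith
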